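/- Let γ ∈ ℝ satisfy γ² + γ − 1 = 0. Then the point [1:0:−γ] of ℙ²(ℂ) lies on each of the four lines L₃, L₅, M₄, N_γ and on no other line of ℋ_γ, and the point [0:1:−(γ+1)] lies on each of the three lines L₂, M₂, N_γ and on no other line of ℋ_γ. In particular N_γ is the line joining the triple point L₃ ∩ L₅ ∩ M₄ to the double point L₂ ∩ M₂ of 𝒞_γ. -/
import Mathlib


open scoped LinearAlgebra.Projectivization

/-- The complex projective plane `ℙ²(ℂ)`, the projectivization of `ℂ³`. -/
abbrev Pt := ℙ ℂ (Fin 3 → ℂ)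

/-- The projective line `{[x:y:z] | a·x + b·y + c·z = 0}` in `ℙ²(ℂ)` determined by the
linear form with coefficients `(a, b, c)`.  (Vanishing of a linear form is independent
of the choice of homogeneous coordinates, so testing it on `p.rep` is equivalent to
testing it on any representative.) -/
def pline (a b c : ℂ) : Set Pt :=
  {p | a * p.rep 0 + b * p.rep 1 + c * p.rep 2 = 0}

/-- The lines `M₁,…,M₅` of the arrangement `𝒞_γ` (0-based: `Mline γ i = M_{i+1}`):
`M₁: z=0`, `M₂: x=0`, `M₃: x=z`, `M₄: x=−(γ+1)z`, `M₅: x=(γ+2)z`. -/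
noncomputable def Mline (γ : ℝ) : Fin 5 → Set Pt :=
  ![pline 0 0 1, pline 1 0 0, pline 1 0 (-1),
    pline 1 0 ((γ : ℂ) + 1), pline 1 0 (-((γ : ℂ) + 2))]

/-- The lines `L₁,…,L₅` of the arrangement `𝒞_γ` (0-based: `Lline γ i = L_{i+1}`):
`L₁: y=x`, `L₂: y=γ(x−z)`, `L₃: y=γx+z`, `L₄: y=z`, `L₅: y=0`. -/
noncomputable def Lline (γ : ℝ) : Fin 5 → Set Pt :=
  ![pline 1 (-1) 0, pline (γ : ℂ) (-1) (-(γ : ℂ)), pline (γ : ℂ) (-1) 1,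
    pline 0 1 (-1), pline 0 1 0]

/-- The extra line `N_γ : γx + (γ+1)y + z = 0` of the arrangement `ℋ_γ = 𝒞_γ ∪ {N_γ}`. -/
noncomputable def Nline (γ : ℝ) : Set Pt := pline (γ : ℂ) ((γ : ℂ) + 1) 1

lemma mem_pline_mk {a b c : ℂ} {v : Fin 3 → ℂ} (hv : v ≠ 0) :
    Projectivization.mk ℂ v hv ∈ pline a b c ↔ a * v 0 + b * v 1 + c * v 2 = 0 := by
  obtain ⟨u, hu⟩ := (Projectivization.mk_eq_mk_iff ℂ _ _ _ hv).mp
    (Projectivization.mk_rep (Projectivization.mk ℂ v hv))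
  have h0 := congrFun hu 0
  have h1 := congrFun hu 1
  have h2 := congrFun hu 2
  simp only [Pi.smul_apply, Units.smul_def, smul_eq_mul] at h0 h1 h2
  show a * _ + b * _ + c * _ = 0 ↔ _
  rw [← h0, ← h1, ← h2]
  have key : a * ((u : ℂ) * v 0) + b * ((u : ℂ) * v 1) + c * ((u : ℂ) * v 2)
      = (u : ℂ) * (a * v 0 + b * v 1 + c * v 2) := by ring
  rw [key, mul_eq_zero]
  simp [u.ne_zero]

/-- For `γ` a root of `γ² + γ − 1 = 0`: the point `[1:0:−γ]` lies exactly on the lines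
`L₃`, `L₅`, `M₄` and `N_γ` of `ℋ_γ`, and the point `[0:1:−(γ+1)]` lies exactly on the
lines `L₂`, `M₂` and `N_γ` of `ℋ_γ`.  In particular `N_γ` is the line joining the triple
point `L₃ ∩ L₅ ∩ M₄` to the double point `L₂ ∩ M₂` of `𝒞_γ`.
(0-based indices: `Lline γ 2 = L₃`, `Lline γ 4 = L₅`, `Mline γ 3 = M₄`, etc.) -/
theorem stmt_13 (γ : ℝ) (hγ : γ ^ 2 + γ - 1 = 0) :
    let p : Pt := Projectivization.mk ℂ (![1, 0, -(γ : ℂ)] : Fin 3 → ℂ)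
      (by intro h; have h0 := congrFun h 0; simp at h0)
    let q : Pt := Projectivization.mk ℂ (![0, 1, -((γ : ℂ) + 1)] : Fin 3 → ℂ)
      (by intro h; have h1 := congrFun h 1; simp at h1)
    (∀ i : Fin 5, p ∈ Lline γ i ↔ i = 2 ∨ i = 4) ∧
    (∀ i : Fin 5, p ∈ Mline γ i ↔ i = 3) ∧
    p ∈ Nline γ ∧
    (∀ i : Fin 5, q ∈ Lline γ i ↔ i = 1) ∧
    (∀ i : Fin 5, q ∈ Mline γ i ↔ i = 1) ∧
    q ∈ Nline γ := by
  intro p q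
  have hc : (γ : ℂ) ^ 2 + (γ : ℂ) - 1 = 0 := by exact_mod_cast congrArg (Complex.ofReal) hγ
  refine ⟨fun i => ?_, fun i => ?_, ?_, fun i => ?_, fun i => ?_, ?_⟩
  · fin_cases i
    · show p ∈ pline 1 (-1) 0 ↔ _
      simp only [p, mem_pline_mk, Matrix.cons_val_zero, Matrix.cons_val_one, Matrix.head_cons, Matrix.cons_val_two, Matrix.tail_cons]
      refine iff_of_false (fun h => ?_) (by decide)
      norm_num at h
    · show p ∈ pline (γ:ℂ) (-1) (-(γ:ℂ)) ↔ _
      simp only [p, mem_pline_mk, Matrix.cons_val_zero, Matrix.cons_val_one, Matrix.head_cons, Matrix.cons_val_two, Matrix.tail_cons]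
      refine iff_of_false (fun h => ?_) (by decide)
      have h2 : (1:ℂ) = 0 := by linear_combination h - hc
      exact one_ne_zero h2
    · show p ∈ pline (γ:ℂ) (-1) 1 ↔ _
      simp only [p, mem_pline_mk, Matrix.cons_val_zero, Matrix.cons_val_one, Matrix.head_cons, Matrix.cons_val_two, Matrix.tail_cons]
      refine iff_of_true (by ring) (by decide)
    · show p ∈ pline 0 1 (-1) ↔ _
      simp only [p, mem_pline_mk, Matrix.cons_val_zero, Matrix.cons_val_one, Matrix.head_cons, Matrix.cons_val_two, Matrix.tail_cons]
      refine iff_of_false (fun h => ?_) (by decide)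
      have h2 : (1:ℂ) = 0 := by linear_combination (↑γ)*h + h - hc
      exact one_ne_zero h2
    · show p ∈ pline 0 1 0 ↔ _
      simp only [p, mem_pline_mk, Matrix.cons_val_zero, Matrix.cons_val_one, Matrix.head_cons, Matrix.cons_val_two, Matrix.tail_cons]
      refine iff_of_true (by ring) (by decide)
  · fin_cases i
    · show p ∈ pline 0 0 1 ↔ _
      simp only [p, mem_pline_mk, Matrix.cons_val_zero, Matrix.cons_val_one, Matrix.head_cons, Matrix.cons_val_two, Matrix.tail_cons]
      refine iff_of_false (fun h => ?_) (by decide)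
      have h2 : (1:ℂ) = 0 := by linear_combination -(↑γ)*h - h - hc
      exact one_ne_zero h2
    · show p ∈ pline 1 0 0 ↔ _
      simp only [p, mem_pline_mk, Matrix.cons_val_zero, Matrix.cons_val_one, Matrix.head_cons, Matrix.cons_val_two, Matrix.tail_cons]
      refine iff_of_false (fun h => ?_) (by decide)
      norm_num at h
    · show p ∈ pline 1 0 (-1) ↔ _
      simp only [p, mem_pline_mk, Matrix.cons_val_zero, Matrix.cons_val_one, Matrix.head_cons, Matrix.cons_val_two, Matrix.tail_cons]
      refine iff_of_false (fun h => ?_) (by decide)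
      have h2 : (1:ℂ) = 0 := by linear_combination (↑γ)*h - hc
      exact one_ne_zero h2
    · show p ∈ pline 1 0 ((γ:ℂ)+1) ↔ _
      simp only [p, mem_pline_mk, Matrix.cons_val_zero, Matrix.cons_val_one, Matrix.head_cons, Matrix.cons_val_two, Matrix.tail_cons]
      refine iff_of_true (by linear_combination -hc) (by decide)
    · show p ∈ pline 1 0 (-((γ:ℂ)+2)) ↔ _
      simp only [p, mem_pline_mk, Matrix.cons_val_zero, Matrix.cons_val_one, Matrix.head_cons, Matrix.cons_val_two, Matrix.tail_cons]
      refine iff_of_false (fun h => ?_) (by decide)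
      have h2 : (1:ℂ) = 0 := by linear_combination (1-↑γ)*h + (↑γ)*hc
      exact one_ne_zero h2
  · show p ∈ pline (γ:ℂ) ((γ:ℂ)+1) 1
    simp only [p, mem_pline_mk, Matrix.cons_val_zero, Matrix.cons_val_one, Matrix.head_cons, Matrix.cons_val_two, Matrix.tail_cons]
    ring
  · fin_cases i
    · show q ∈ pline 1 (-1) 0 ↔ _
      simp only [q, mem_pline_mk, Matrix.cons_val_zero, Matrix.cons_val_one, Matrix.head_cons, Matrix.cons_val_two, Matrix.tail_cons]
      refine iff_of_false (fun h => ?_) (by decide)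
      norm_num at h
    · show q ∈ pline (γ:ℂ) (-1) (-(γ:ℂ)) ↔ _
      simp only [q, mem_pline_mk, Matrix.cons_val_zero, Matrix.cons_val_one, Matrix.head_cons, Matrix.cons_val_two, Matrix.tail_cons]
      refine iff_of_true (by linear_combination hc) (by decide)
    · show q ∈ pline (γ:ℂ) (-1) 1 ↔ _
      simp only [q, mem_pline_mk, Matrix.cons_val_zero, Matrix.cons_val_one, Matrix.head_cons, Matrix.cons_val_two, Matrix.tail_cons]
      refine iff_of_false (fun h => ?_) (by decide)
      have h2 : (1:ℂ) = 0 := by linear_combination (↑γ-1)*h + hc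
      exact one_ne_zero h2
    · show q ∈ pline 0 1 (-1) ↔ _
      simp only [q, mem_pline_mk, Matrix.cons_val_zero, Matrix.cons_val_one, Matrix.head_cons, Matrix.cons_val_two, Matrix.tail_cons]
      refine iff_of_false (fun h => ?_) (by decide)
      have h2 : (1:ℂ) = 0 := by linear_combination (1-↑γ)*h + hc
      exact one_ne_zero h2
    · show q ∈ pline 0 1 0 ↔ _
      simp only [q, mem_pline_mk, Matrix.cons_val_zero, Matrix.cons_val_one, Matrix.head_cons, Matrix.cons_val_two, Matrix.tail_cons]
      refine iff_of_false (fun h => ?_) (by decide)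
      norm_num at h
  · fin_cases i
    · show q ∈ pline 0 0 1 ↔ _
      simp only [q, mem_pline_mk, Matrix.cons_val_zero, Matrix.cons_val_one, Matrix.head_cons, Matrix.cons_val_two, Matrix.tail_cons]
      refine iff_of_false (fun h => ?_) (by decide)
      have h2 : (1:ℂ) = 0 := by linear_combination -(↑γ)*h - hc
      exact one_ne_zero h2
    · show q ∈ pline 1 0 0 ↔ _
      simp only [q, mem_pline_mk, Matrix.cons_val_zero, Matrix.cons_val_one, Matrix.head_cons, Matrix.cons_val_two, Matrix.tail_cons]
      refine iff_of_true (by ring) (by decide)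
    · show q ∈ pline 1 0 (-1) ↔ _
      simp only [q, mem_pline_mk, Matrix.cons_val_zero, Matrix.cons_val_one, Matrix.head_cons, Matrix.cons_val_two, Matrix.tail_cons]
      refine iff_of_false (fun h => ?_) (by decide)
      have h2 : (1:ℂ) = 0 := by linear_combination (↑γ)*h - hc
      exact one_ne_zero h2
    · show q ∈ pline 1 0 ((γ:ℂ)+1) ↔ _
      simp only [q, mem_pline_mk, Matrix.cons_val_zero, Matrix.cons_val_one, Matrix.head_cons, Matrix.cons_val_two, Matrix.tail_cons]
      refine iff_of_false (fun h => ?_) (by decide)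
      have h2 : (1:ℂ) = 0 := by linear_combination (↑γ-1)*h + (↑γ)*hc
      exact one_ne_zero h2
    · show q ∈ pline 1 0 (-((γ:ℂ)+2)) ↔ _
      simp only [q, mem_pline_mk, Matrix.cons_val_zero, Matrix.cons_val_one, Matrix.head_cons, Matrix.cons_val_two, Matrix.tail_cons]
      refine iff_of_false (fun h => ?_) (by decide)
      have h2 : (1:ℂ) = 0 := by linear_combination (2*↑γ-1)*h - (2*↑γ+3)*hc
      exact one_ne_zero h2
  · show q ∈ pline (γ:ℂ) ((γ:ℂ)+1) 1
    simp only [q, mem_pline_mk, Matrix.cons_val_zero, Matrix.cons_val_one, Matrix.head_cons, Matrix.cons_val_two, Matrix.tail_cons]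
    ring
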